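/- In the LR-ending partisan subtraction game with S = {2, 4k+3} for a positive integer k, the value sequence of a single pile of n tokens is periodic with period 4k+5: for 0 ≤ ℓ ≤ k−1, piles of size 4ℓ, 4ℓ+1, 4ℓ+2, 4ℓ+3 have values *L, *R, {*L}, {*R}, and piles of size 4k, 4k+1, 4k+2, 4k+3, 4k+4 have values *L, *R, {*L}, {*L,*R}, {*R,{*L}} respectively (all up to equivalence, repeating with period 4k+5). -/

import Mathlib

/-- Positions of LR-ending partisan games: two terminals and finite option sets
(represented as lists; set-like behavior is captured by the `Iso` relation). -/
inductive Pos : Type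
  | termL : Pos
  | termR : Pos
  | opts : List Pos → Pos

namespace Pos

/-- Valid positions: every non-terminal position has a nonempty set of options. -/
inductive Valid : Pos → Prop
  | termL : Valid termL
  | termR : Valid termR
  | opts : ∀ gs : List Pos, gs ≠ [] → (∀ g ∈ gs, Valid g) → Valid (opts gs)

/-- Disjunctive sum. -/
def sum : Pos → Pos → Pos
  | termL, termL => termL
  | termL, termR => termR
  | termR, termL => termR
  | termR, termR => termL
  | termL, opts hs => opts (hs.attach.map (fun h => sum termL h.1))
  | termR, opts hs => opts (hs.attach.map (fun h => sum termR h.1))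
  | opts gs, termL => opts (gs.attach.map (fun g => sum g.1 termL))
  | opts gs, termR => opts (gs.attach.map (fun g => sum g.1 termR))
  | opts gs, opts hs =>
      opts (gs.attach.map (fun g => sum g.1 (opts hs)) ++
            hs.attach.map (fun h => sum (opts gs) h.1))
termination_by g h => sizeOf g + sizeOf h
decreasing_by
  all_goals
    first
      | (have := List.sizeOf_lt_of_mem h.2; simp_all; omega)
      | (have := List.sizeOf_lt_of_mem g.2; simp_all; omega)

/-- Conjugate: swap the two kinds of terminal positions. -/
def conj : Pos → Pos
  | termL => termR
  | termR => termL
  | opts gs => opts (gs.attach.map (fun g => conj g.1))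
decreasing_by
  have := List.sizeOf_lt_of_mem g.2; simp_all; omega

/-- Isomorphism of game trees (positions viewed as sets of options). -/
def Iso : Pos → Pos → Prop
  | termL, termL => True
  | termR, termR => True
  | opts gs, opts hs =>
      (∀ g ∈ gs.attach, ∃ h ∈ hs.attach, Iso g.1 h.1) ∧
      (∀ h ∈ hs.attach, ∃ g ∈ gs.attach, Iso g.1 h.1)
  | _, _ => False
termination_by g h => sizeOf g + sizeOf h
decreasing_by
  all_goals
    (have hg := List.sizeOf_lt_of_mem g.2; have hh := List.sizeOf_lt_of_mem h.2;
     simp_all; omega)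

inductive Player : Type
  | left : Player
  | right : Player
  deriving DecidableEq

/-- `Wins p b G` : player `p` has a winning strategy from position `G`,
where `b = true` means it is `p`'s turn to move and `b = false` means the
opponent is to move.  A terminal position is won by the player given by
its label, regardless of whose turn it is. -/
inductive Wins : Player → Bool → Pos → Prop
  | termL : ∀ b, Wins Player.left b termL
  | termR : ∀ b, Wins Player.right b termR
  | move : ∀ (p : Player) (gs : List Pos) (g : Pos), g ∈ gs →
      Wins p false g → Wins p true (opts gs)
  | wait : ∀ (p : Player) (gs : List Pos),
      (∀ g, g ∈ gs → Wins p true g) → Wins p false (opts gs)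

inductive Outcome : Type
  | L : Outcome
  | R : Outcome
  | N : Outcome
  | P : Outcome
  deriving DecidableEq

/-- The outcome of a position. -/
noncomputable def outcome (G : Pos) : Outcome := by
  classical
  exact
    if Wins Player.left true G then
      if Wins Player.left false G then Outcome.L else Outcome.N
    else
      if Wins Player.left false G then Outcome.P else Outcome.R

/-- Equivalence of positions: the outcome agrees in every (valid) context. -/
def equiv (G H : Pos) : Prop :=
  ∀ X : Pos, Valid X → outcome (sum G X) = outcome (sum H X)

end Pos
namespace Pos

mutual
/-- `Ln n` is the position `*L_n`: `*L_0 = *L`, `*L_n = {*L_{n-1}, ..., *L_0}`. -/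
def Ln : ℕ → Pos
  | 0 => termL
  | n + 1 => opts (LnList (n + 1))
termination_by n => 2 * n + 1
/-- `LnList n = [*L_{n-1}, ..., *L_0]`. -/
def LnList : ℕ → List Pos
  | 0 => []
  | n + 1 => Ln n :: LnList n
termination_by n => 2 * n
end

mutual
/-- `Rn n` is the position `*R_n`. -/
def Rn : ℕ → Pos
  | 0 => termR
  | n + 1 => opts (RnList (n + 1))
termination_by n => 2 * n + 1
def RnList : ℕ → List Pos
  | 0 => []
  | n + 1 => Rn n :: RnList n
termination_by n => 2 * n
end

/-- `kome n` is `✠_n = {*L_{n-1}, *R_{n-1}, ..., *L_0, *R_0}` (for `n ≥ 1`). -/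
def kome (n : ℕ) : Pos := opts (LnList n ++ RnList n)

mutual
/-- `starAux n` represents `★(n+1)`: `★1 = {*L, *R}`, `★n = {★(n-1),...,★1,*L,*R}`. -/
def starAux : ℕ → Pos
  | 0 => opts [termL, termR]
  | n + 1 => opts (starList (n + 1) ++ [termL, termR])
termination_by n => 2 * n + 1
/-- `starList n = [★n, ..., ★1]`. -/
def starList : ℕ → List Pos
  | 0 => []
  | n + 1 => starAux n :: starList n
termination_by n => 2 * n
end

/-- `bigstar n` is `★n` (meaningful for `n ≥ 1`). -/
def bigstar (n : ℕ) : Pos := starAux (n - 1)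

/-- Sum of a list of positions (`*L` is the empty sum, and `G + *L = G`). -/
def sumList (l : List Pos) : Pos := l.foldr sum termL

/-- Nim-sum (XOR) of a list of naturals. -/
def xorList (l : List ℕ) : ℕ := l.foldr (· ^^^ ·) 0

/-- Minimum excludant of a list of naturals. -/
noncomputable def mexList (l : List ℕ) : ℕ := sInf {n : ℕ | n ∉ l}

end Pos
namespace Pos

mutual
/-- A single non-initial pile of `n` tokens in Even Nim: an arbitrary positive
even number of tokens may be removed; a pile of 0 or 1 tokens is terminal,
won by Left (even remainder) resp. Right (odd remainder). -/
def npile : ℕ → Pos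
  | 0 => termL
  | 1 => termR
  | n + 2 => opts (npileList (n + 2))
termination_by n => 2 * n + 1
/-- The options of a non-initial pile of `n` tokens: `[pile (n-2), pile (n-4), ...]`. -/
def npileList : ℕ → List Pos
  | 0 => []
  | 1 => []
  | n + 2 => npile n :: npileList n
termination_by n => 2 * n
end

/-- A single initial pile of `a` tokens in Even Nim: any positive number of
tokens may be removed on the first move. -/
def ipile (a : ℕ) : Pos :=
  if a = 0 then termL else opts ((List.range a).reverse.map npile)

/-- A single pile of `n` tokens in the LR-ending partisan subtraction game with
subtraction set `S = {2, m}` (for `m ≥ 2`): a pile of 0 or 1 tokens is terminal,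
won by Left resp. Right according to the parity of the remainder. -/
def subPile (m : ℕ) (n : ℕ) : Pos :=
  if n < 2 then (if n = 0 then termL else termR)
  else opts (subPile m (n - 2) ::
    (if 2 ≤ m ∧ m ≤ n then [subPile m (n - m)] else []))
termination_by n
decreasing_by all_goals omega

end Pos

namespace Pos

/-- The period-`(4k+5)` table of values for the subtraction game with
`S = {2, 4k+3}`: residues `4ℓ, 4ℓ+1, 4ℓ+2, 4ℓ+3` (`0 ≤ ℓ ≤ k-1`) give
`*L, *R, {*L}, {*R}`, and residues `4k, 4k+1, 4k+2, 4k+3, 4k+4` give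
`*L, *R, {*L}, {*L,*R}, {*R,{*L}}`. -/
def table4k3 (k r : ℕ) : Pos :=
  if r < 4 * k then
    (if r % 4 = 0 then termL
     else if r % 4 = 1 then termR
     else if r % 4 = 2 then opts [termL]
     else opts [termR])
  else if r = 4 * k then termL
  else if r = 4 * k + 1 then termR
  else if r = 4 * k + 2 then opts [termL]
  else if r = 4 * k + 3 then opts [termL, termR]
  else opts [termR, opts [termL]]

end Pos
namespace Pos

-- sum unfolding lemmas
lemma sum_LL : sum termL termL = termL := by rw [sum]
lemma sum_LR : sum termL termR = termR := by rw [sum]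
lemma sum_RL : sum termR termL = termR := by rw [sum]
lemma sum_RR : sum termR termR = termL := by rw [sum]
lemma sum_L_opts (hs : List Pos) :
    sum termL (opts hs) = opts (hs.map (fun h => sum termL h)) := by
  rw [sum]; rw [List.attach_map_val]
lemma sum_R_opts (hs : List Pos) :
    sum termR (opts hs) = opts (hs.map (fun h => sum termR h)) := by
  rw [sum]; rw [List.attach_map_val]
lemma sum_opts_L (gs : List Pos) :
    sum (opts gs) termL = opts (gs.map (fun g => sum g termL)) := by
  rw [sum]; rw [List.attach_map_val (l := gs) (f := fun g => sum g termL)]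
lemma sum_opts_R (gs : List Pos) :
    sum (opts gs) termR = opts (gs.map (fun g => sum g termR)) := by
  rw [sum]; rw [List.attach_map_val (l := gs) (f := fun g => sum g termR)]
lemma sum_opts_opts (gs hs : List Pos) :
    sum (opts gs) (opts hs) =
      opts (gs.map (fun g => sum g (opts hs)) ++ hs.map (fun h => sum (opts gs) h)) := by
  rw [sum]; rw [List.attach_map_val (l := gs) (f := fun g => sum g (opts hs)),
    List.attach_map_val (l := hs) (f := fun h => sum (opts gs) h)]

-- Wins characterizations (Left only)
lemma winsL_termL (b : Bool) : Wins Player.left b termL := Wins.termL b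
lemma winsL_termL_iff (b : Bool) : Wins Player.left b termL ↔ True := by
  simp [winsL_termL]
lemma winsL_termR_iff (b : Bool) : Wins Player.left b termR ↔ False := by
  constructor
  · intro h; cases h
  · exact False.elim
lemma winsL_true_opts (gs : List Pos) :
    Wins Player.left true (opts gs) ↔ ∃ g ∈ gs, Wins Player.left false g := by
  constructor
  · intro h; cases h with
    | move _ _ g hg hw => exact ⟨g, hg, hw⟩
  · rintro ⟨g, hg, hw⟩; exact Wins.move _ _ g hg hw
lemma winsL_false_opts (gs : List Pos) :
    Wins Player.left false (opts gs) ↔ ∀ g ∈ gs, Wins Player.left true g := by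
  constructor
  · intro h; cases h with
    | wait _ _ hw => exact hw
  · exact Wins.wait _ _

lemma outcome_congr {G H : Pos}
    (h : ∀ b, Wins Player.left b G ↔ Wins Player.left b H) :
    outcome G = outcome H := by
  have h1 := h true; have h2 := h false
  classical
  simp only [outcome]
  by_cases a1 : Wins Player.left true G <;> by_cases a2 : Wins Player.left false G <;>
    simp [a1, a2, h1.mp, h2.mp, (h1.symm.mp), (h2.symm.mp),
      fun x => (h1.not.mp x), fun x => (h2.not.mp x)]

lemma winsL_of_outcome_eq {G H : Pos} (h : outcome G = outcome H) (b : Bool) :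
    Wins Player.left b G ↔ Wins Player.left b H := by
  simp only [outcome] at h
  by_cases a1 : Wins Player.left true G <;> by_cases a2 : Wins Player.left false G <;>
    by_cases a3 : Wins Player.left true H <;> by_cases a4 : Wins Player.left false H <;>
    simp [a1, a2, a3, a4] at h ⊢ <;> cases b <;> tauto

end Pos
namespace Pos

/-- The six base equivalences, stated as `Wins`-iffs in every context. -/
def mstmt (X : Pos) : Prop := ∀ b : Bool,
  (Wins Player.left b (sum (opts [opts [termL]]) X) ↔
    Wins Player.left b (sum termL X)) ∧
  (Wins Player.left b (sum (opts [opts [termR]]) X) ↔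
    Wins Player.left b (sum termR X)) ∧
  (Wins Player.left b (sum (opts [opts [termL, termR], opts [termL]]) X) ↔
    Wins Player.left b (sum termL X)) ∧
  (Wins Player.left b (sum (opts [opts [termR, opts [termL]], opts [termR]]) X) ↔
    Wins Player.left b (sum termR X)) ∧
  (Wins Player.left b (sum (opts [opts [termR], opts [termL, termR]]) X) ↔
    Wins Player.left b (sum termR X)) ∧
  (Wins Player.left b (sum (opts [termL, opts [termR, opts [termL]]]) X) ↔
    Wins Player.left b (sum (opts [termL]) X))

theorem master : ∀ X : Pos, mstmt X
  | termL => by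
      unfold mstmt
      intro b; cases b <;>
        refine ⟨?_, ?_, ?_, ?_, ?_, ?_⟩ <;>
        simp [sum_opts_L, sum_LL, sum_RL, winsL_true_opts, winsL_false_opts,
          winsL_termL_iff, winsL_termR_iff]
  | termR => by
      unfold mstmt
      intro b; cases b <;>
        refine ⟨?_, ?_, ?_, ?_, ?_, ?_⟩ <;>
        simp [sum_opts_R, sum_LR, sum_RR, winsL_true_opts, winsL_false_opts,
          winsL_termL_iff, winsL_termR_iff]
  | opts xs => by
      have IH : ∀ x ∈ xs, mstmt x := fun x hx => master x
      have IH1 : ∀ x ∈ xs, ∀ b : Bool,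
          Wins Player.left b (sum (opts [opts [termL]]) x) ↔
          Wins Player.left b (sum termL x) := fun x hx b => (IH x hx b).1
      have IH2 : ∀ x ∈ xs, ∀ b : Bool,
          Wins Player.left b (sum (opts [opts [termR]]) x) ↔
          Wins Player.left b (sum termR x) := fun x hx b => (IH x hx b).2.1
      have IH3 : ∀ x ∈ xs, ∀ b : Bool,
          Wins Player.left b (sum (opts [opts [termL, termR], opts [termL]]) x) ↔
          Wins Player.left b (sum termL x) := fun x hx b => (IH x hx b).2.2.1
      have IH4 : ∀ x ∈ xs, ∀ b : Bool,
          Wins Player.left b (sum (opts [opts [termR, opts [termL]], opts [termR]]) x) ↔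
          Wins Player.left b (sum termR x) := fun x hx b => (IH x hx b).2.2.2.1
      have IH5 : ∀ x ∈ xs, ∀ b : Bool,
          Wins Player.left b (sum (opts [opts [termR], opts [termL, termR]]) x) ↔
          Wins Player.left b (sum termR x) := fun x hx b => (IH x hx b).2.2.2.2.1
      have IH6 : ∀ x ∈ xs, ∀ b : Bool,
          Wins Player.left b (sum (opts [termL, opts [termR, opts [termL]]]) x) ↔
          Wins Player.left b (sum (opts [termL]) x) := fun x hx b => (IH x hx b).2.2.2.2.2
      have bridge : ∀ C D : Pos,
          (∀ x ∈ xs, ∀ b : Bool,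
            (Wins Player.left b (sum C x) ↔ Wins Player.left b (sum D x))) →
          ((∃ a ∈ xs, Wins Player.left false (sum C a)) ↔
            (∃ a ∈ xs, Wins Player.left false (sum D a))) ∧
          ((∀ a ∈ xs, Wins Player.left true (sum C a)) ↔
            (∀ a ∈ xs, Wins Player.left true (sum D a))) := by
        intro C D h
        constructor
        · constructor <;> rintro ⟨a, ha, hw⟩
          · exact ⟨a, ha, (h a ha false).mp hw⟩
          · exact ⟨a, ha, (h a ha false).mpr hw⟩
        · constructor <;> intro hall a ha
          · exact (h a ha true).mp (hall a ha)
          · exact (h a ha true).mpr (hall a ha)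
      obtain ⟨E1, A1⟩ := bridge _ _ IH1
      obtain ⟨E2, A2⟩ := bridge _ _ IH2
      obtain ⟨E3, A3⟩ := bridge _ _ IH3
      obtain ⟨E4, A4⟩ := bridge _ _ IH4
      obtain ⟨E5, A5⟩ := bridge _ _ IH5
      obtain ⟨E6, A6⟩ := bridge _ _ IH6
      unfold mstmt
      intro b; cases b <;>
        refine ⟨?_, ?_, ?_, ?_, ?_, ?_⟩ <;>
        (simp only
          [sum_opts_opts, sum_L_opts, sum_R_opts, List.map_cons, List.map_nil,
          List.nil_append, List.cons_append, winsL_true_opts, winsL_false_opts,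
          winsL_termL_iff, winsL_termR_iff, List.mem_cons, List.mem_map, List.mem_append,
          List.not_mem_nil, exists_exists_and_eq_and,
          forall_exists_index, forall_apply_eq_imp_iff₂, and_imp,
          exists_eq_or_imp, exists_eq_left, forall_eq_or_imp, forall_eq,
          false_or, or_false, true_and, and_true, iff_true, true_iff, false_iff, iff_false,
          not_false_iff, exists_false, false_and, and_false, exists_prop,
          E1, A1, E2, A2, E3, A3, E4, A4, E5, A5, E6, A6]) <;>
        itauto
termination_by X => sizeOf X
decreasing_by have := List.sizeOf_lt_of_mem hx; simp_all; omega

end Pos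
namespace Pos

lemma equiv_refl (G : Pos) : equiv G G := fun _ _ => rfl
lemma equiv_symm {G H : Pos} (h : equiv G H) : equiv H G := fun X hX => (h X hX).symm
lemma equiv_trans {G H K : Pos} (h1 : equiv G H) (h2 : equiv H K) : equiv G K :=
  fun X hX => (h1 X hX).trans (h2 X hX)

theorem winsSum_congr (gs hs : List Pos)
    (h1 : ∀ g ∈ gs, ∃ h ∈ hs, equiv g h) (h2 : ∀ h ∈ hs, ∃ g ∈ gs, equiv g h) :
    ∀ X : Pos, Valid X → ∀ b : Bool,
      (Wins Player.left b (sum (opts gs) X) ↔ Wins Player.left b (sum (opts hs) X))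
  | termL, hX => by
      intro b
      rw [sum_opts_L, sum_opts_L]
      cases b
      · rw [winsL_false_opts, winsL_false_opts]
        constructor
        · intro hall g' hg'
          rcases List.mem_map.mp hg' with ⟨h0, hh0, rfl⟩
          rcases h2 h0 hh0 with ⟨g0, hg0, he⟩
          exact (winsL_of_outcome_eq (he termL Valid.termL) true).mp
            (hall _ (List.mem_map.mpr ⟨g0, hg0, rfl⟩))
        · intro hall g' hg'
          rcases List.mem_map.mp hg' with ⟨g0, hg0, rfl⟩
          rcases h1 g0 hg0 with ⟨h0, hh0, he⟩
          exact (winsL_of_outcome_eq (he termL Valid.termL) true).mpr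
            (hall _ (List.mem_map.mpr ⟨h0, hh0, rfl⟩))
      · rw [winsL_true_opts, winsL_true_opts]
        constructor
        · rintro ⟨g', hg', hw⟩
          rcases List.mem_map.mp hg' with ⟨g0, hg0, rfl⟩
          rcases h1 g0 hg0 with ⟨h0, hh0, he⟩
          exact ⟨_, List.mem_map.mpr ⟨h0, hh0, rfl⟩,
            (winsL_of_outcome_eq (he termL Valid.termL) false).mp hw⟩
        · rintro ⟨g', hg', hw⟩
          rcases List.mem_map.mp hg' with ⟨h0, hh0, rfl⟩
          rcases h2 h0 hh0 with ⟨g0, hg0, he⟩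
          exact ⟨_, List.mem_map.mpr ⟨g0, hg0, rfl⟩,
            (winsL_of_outcome_eq (he termL Valid.termL) false).mpr hw⟩
  | termR, hX => by
      intro b
      rw [sum_opts_R, sum_opts_R]
      cases b
      · rw [winsL_false_opts, winsL_false_opts]
        constructor
        · intro hall g' hg'
          rcases List.mem_map.mp hg' with ⟨h0, hh0, rfl⟩
          rcases h2 h0 hh0 with ⟨g0, hg0, he⟩
          exact (winsL_of_outcome_eq (he termR Valid.termR) true).mp
            (hall _ (List.mem_map.mpr ⟨g0, hg0, rfl⟩))
        · intro hall g' hg'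
          rcases List.mem_map.mp hg' with ⟨g0, hg0, rfl⟩
          rcases h1 g0 hg0 with ⟨h0, hh0, he⟩
          exact (winsL_of_outcome_eq (he termR Valid.termR) true).mpr
            (hall _ (List.mem_map.mpr ⟨h0, hh0, rfl⟩))
      · rw [winsL_true_opts, winsL_true_opts]
        constructor
        · rintro ⟨g', hg', hw⟩
          rcases List.mem_map.mp hg' with ⟨g0, hg0, rfl⟩
          rcases h1 g0 hg0 with ⟨h0, hh0, he⟩
          exact ⟨_, List.mem_map.mpr ⟨h0, hh0, rfl⟩,
            (winsL_of_outcome_eq (he termR Valid.termR) false).mp hw⟩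
        · rintro ⟨g', hg', hw⟩
          rcases List.mem_map.mp hg' with ⟨h0, hh0, rfl⟩
          rcases h2 h0 hh0 with ⟨g0, hg0, he⟩
          exact ⟨_, List.mem_map.mpr ⟨g0, hg0, rfl⟩,
            (winsL_of_outcome_eq (he termR Valid.termR) false).mpr hw⟩
  | opts xs, hX => by
      have hxs : ∀ x ∈ xs, Valid x := by cases hX with | opts _ _ hv => exact hv
      intro b
      rw [sum_opts_opts, sum_opts_opts]
      cases b
      · rw [winsL_false_opts, winsL_false_opts]
        constructor
        · intro hall g' hg'
          rcases List.mem_append.mp hg' with hmem | hmem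
          · rcases List.mem_map.mp hmem with ⟨h0, hh0, rfl⟩
            rcases h2 h0 hh0 with ⟨g0, hg0, he⟩
            exact (winsL_of_outcome_eq (he (opts xs) hX) true).mp
              (hall _ (List.mem_append_left _ (List.mem_map.mpr ⟨g0, hg0, rfl⟩)))
          · rcases List.mem_map.mp hmem with ⟨x, hx, rfl⟩
            exact (winsSum_congr gs hs h1 h2 x (hxs x hx) true).mp
              (hall _ (List.mem_append_right _ (List.mem_map.mpr ⟨x, hx, rfl⟩)))
        · intro hall g' hg'
          rcases List.mem_append.mp hg' with hmem | hmem
          · rcases List.mem_map.mp hmem with ⟨g0, hg0, rfl⟩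
            rcases h1 g0 hg0 with ⟨h0, hh0, he⟩
            exact (winsL_of_outcome_eq (he (opts xs) hX) true).mpr
              (hall _ (List.mem_append_left _ (List.mem_map.mpr ⟨h0, hh0, rfl⟩)))
          · rcases List.mem_map.mp hmem with ⟨x, hx, rfl⟩
            exact (winsSum_congr gs hs h1 h2 x (hxs x hx) true).mpr
              (hall _ (List.mem_append_right _ (List.mem_map.mpr ⟨x, hx, rfl⟩)))
      · rw [winsL_true_opts, winsL_true_opts]
        constructor
        · rintro ⟨g', hg', hw⟩
          rcases List.mem_append.mp hg' with hmem | hmem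
          · rcases List.mem_map.mp hmem with ⟨g0, hg0, rfl⟩
            rcases h1 g0 hg0 with ⟨h0, hh0, he⟩
            exact ⟨_, List.mem_append_left _ (List.mem_map.mpr ⟨h0, hh0, rfl⟩),
              (winsL_of_outcome_eq (he (opts xs) hX) false).mp hw⟩
          · rcases List.mem_map.mp hmem with ⟨x, hx, rfl⟩
            exact ⟨_, List.mem_append_right _ (List.mem_map.mpr ⟨x, hx, rfl⟩),
              (winsSum_congr gs hs h1 h2 x (hxs x hx) false).mp hw⟩
        · rintro ⟨g', hg', hw⟩
          rcases List.mem_append.mp hg' with hmem | hmem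
          · rcases List.mem_map.mp hmem with ⟨h0, hh0, rfl⟩
            rcases h2 h0 hh0 with ⟨g0, hg0, he⟩
            exact ⟨_, List.mem_append_left _ (List.mem_map.mpr ⟨g0, hg0, rfl⟩),
              (winsL_of_outcome_eq (he (opts xs) hX) false).mpr hw⟩
          · rcases List.mem_map.mp hmem with ⟨x, hx, rfl⟩
            exact ⟨_, List.mem_append_right _ (List.mem_map.mpr ⟨x, hx, rfl⟩),
              (winsSum_congr gs hs h1 h2 x (hxs x hx) false).mpr hw⟩
termination_by X => sizeOf X
decreasing_by all_goals (have := List.sizeOf_lt_of_mem hx; simp_all; omega)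

/-- Congruence: replacing options by equivalent ones gives an equivalent position. -/
lemma equiv_opts (gs hs : List Pos)
    (h1 : ∀ g ∈ gs, ∃ h ∈ hs, equiv g h) (h2 : ∀ h ∈ hs, ∃ g ∈ gs, equiv g h) :
    equiv (opts gs) (opts hs) :=
  fun X hX => outcome_congr (winsSum_congr gs hs h1 h2 X hX)

lemma equiv_opts_single {a b : Pos} (h : equiv a b) : equiv (opts [a]) (opts [b]) := by
  refine equiv_opts _ _ ?_ ?_
  · intro g hg; simp only [List.mem_singleton] at hg; subst hg
    exact ⟨b, by simp, h⟩
  · intro g hg; simp only [List.mem_singleton] at hg; subst hg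
    exact ⟨a, by simp, h⟩

lemma equiv_opts_pair {a a' b b' : Pos} (ha : equiv a a') (hb : equiv b b') :
    equiv (opts [a, b]) (opts [a', b']) := by
  refine equiv_opts _ _ ?_ ?_
  · intro g hg
    rcases List.mem_cons.mp hg with rfl | hg
    · exact ⟨a', by simp, ha⟩
    · simp only [List.mem_singleton] at hg; subst hg
      exact ⟨b', by simp, hb⟩
  · intro g hg
    rcases List.mem_cons.mp hg with rfl | hg
    · exact ⟨a, by simp, ha⟩
    · simp only [List.mem_singleton] at hg; subst hg
      exact ⟨b, by simp, hb⟩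

lemma equiv_pair_dup (a : Pos) : equiv (opts [a, a]) (opts [a]) := by
  refine equiv_opts _ _ ?_ ?_
  · intro g hg
    rcases List.mem_cons.mp hg with rfl | hg
    · exact ⟨g, by simp, equiv_refl g⟩
    · simp only [List.mem_singleton] at hg; subst hg
      exact ⟨g, by simp, equiv_refl g⟩
  · intro g hg
    simp only [List.mem_singleton] at hg; subst hg
    exact ⟨g, by simp, equiv_refl g⟩

lemma equiv_swap (a b : Pos) : equiv (opts [a, b]) (opts [b, a]) := by
  refine equiv_opts _ _ ?_ ?_
  · intro g hg
    rcases List.mem_cons.mp hg with rfl | hg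
    · exact ⟨g, by simp, equiv_refl g⟩
    · simp only [List.mem_singleton] at hg; subst hg
      exact ⟨g, by simp, equiv_refl g⟩
  · intro g hg
    rcases List.mem_cons.mp hg with rfl | hg
    · exact ⟨g, by simp, equiv_refl g⟩
    · simp only [List.mem_singleton] at hg; subst hg
      exact ⟨g, by simp, equiv_refl g⟩

/-- `{{*L}} ≡ *L`. -/
lemma equiv_B1 : equiv (opts [opts [termL]]) termL :=
  fun X _ => outcome_congr (fun b => (master X b).1)
/-- `{{*R}} ≡ *R`. -/
lemma equiv_B2 : equiv (opts [opts [termR]]) termR :=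
  fun X _ => outcome_congr (fun b => (master X b).2.1)
/-- `{{*L,*R},{*L}} ≡ *L`. -/
lemma equiv_B3 : equiv (opts [opts [termL, termR], opts [termL]]) termL :=
  fun X _ => outcome_congr (fun b => (master X b).2.2.1)
/-- `{{*R,{*L}},{*R}} ≡ *R`. -/
lemma equiv_B4 : equiv (opts [opts [termR, opts [termL]], opts [termR]]) termR :=
  fun X _ => outcome_congr (fun b => (master X b).2.2.2.1)
/-- `{{*R},{*L,*R}} ≡ *R`. -/
lemma equiv_B5 : equiv (opts [opts [termR], opts [termL, termR]]) termR :=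
  fun X _ => outcome_congr (fun b => (master X b).2.2.2.2.1)
/-- `{*L,{*R,{*L}}} ≡ {*L}`. -/
lemma equiv_B6 : equiv (opts [termL, opts [termR, opts [termL]]]) (opts [termL]) :=
  fun X _ => outcome_congr (fun b => (master X b).2.2.2.2.2)

end Pos
namespace Pos

lemma mod_sub_eq (p n d : ℕ) (hd0 : 0 < d) (hdp : d < p) (hdn : d ≤ n) :
    (n - d) % p = if d ≤ n % p then n % p - d else n % p + p - d := by
  have hp : 0 < p := by omega
  have hnp : n % p < p := Nat.mod_lt _ hp
  have h1 : (n - d) % p = (n - d + p) % p := (Nat.add_mod_right _ _).symm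
  have h2 : n - d + p = n + (p - d) := by omega
  rw [h1, h2, Nat.add_mod, Nat.mod_eq_of_lt (show p - d < p by omega)]
  split_ifs with h
  · rw [show n % p + (p - d) = (n % p - d) + p by omega, Nat.add_mod_right,
      Nat.mod_eq_of_lt (by omega)]
  · rw [Nat.mod_eq_of_lt (by omega)]; omega

lemma table_eq_L (k r : ℕ) (h : (r < 4 * k ∧ r % 4 = 0) ∨ r = 4 * k) :
    table4k3 k r = termL := by
  unfold table4k3; split_ifs <;> first | rfl | (exfalso; omega)

lemma table_eq_R (k r : ℕ) (h : (r < 4 * k ∧ r % 4 = 1) ∨ r = 4 * k + 1) :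
    table4k3 k r = termR := by
  unfold table4k3; split_ifs <;> first | rfl | (exfalso; omega)

lemma table_eq_L1 (k r : ℕ) (h : (r < 4 * k ∧ r % 4 = 2) ∨ r = 4 * k + 2) :
    table4k3 k r = opts [termL] := by
  unfold table4k3; split_ifs <;> first | rfl | (exfalso; omega)

lemma table_eq_R1 (k r : ℕ) (h : r < 4 * k ∧ r % 4 = 3) :
    table4k3 k r = opts [termR] := by
  unfold table4k3; split_ifs <;> first | rfl | (exfalso; omega)

lemma table_eq_LR (k r : ℕ) (h : r = 4 * k + 3) :
    table4k3 k r = opts [termL, termR] := by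
  unfold table4k3; split_ifs <;> first | rfl | (exfalso; omega)

lemma table_eq_B (k r : ℕ) (h : 4 * k + 3 < r) :
    table4k3 k r = opts [termR, opts [termL]] := by
  unfold table4k3; split_ifs <;> first | rfl | (exfalso; omega)

end Pos

/-- in the LR-ending partisan subtraction game with
`S = {2, 4k+3}` (`k ≥ 1`), the value of a pile of `n` tokens is periodic with
period `4k+5`, given by the table above (up to equivalence). -/
theorem subtraction_2_4k3 (k : ℕ) (hk : 1 ≤ k) (n : ℕ) :
    Pos.equiv (Pos.subPile (4 * k + 3) n) (Pos.table4k3 k (n % (4 * k + 5))) := by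
  open Pos in
  induction n using Nat.strong_induction_on with
  | _ n IH =>
    by_cases h2 : n < 2
    · interval_cases n
      · rw [subPile]
        norm_num
        rw [table_eq_L k 0 (by omega)]
        exact equiv_refl _
      · rw [subPile]
        norm_num
        rw [table_eq_R k 1 (by omega)]
        exact equiv_refl _
    · rw [subPile, if_neg h2]
      by_cases hmn : 4 * k + 3 ≤ n
      · rw [if_pos ⟨by omega, hmn⟩]
        have IH2 := IH (n - 2) (by omega)
        have IHm := IH (n - (4 * k + 3)) (by omega)
        rw [mod_sub_eq (4 * k + 5) n 2 (by omega) (by omega) (by omega)] at IH2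
        rw [mod_sub_eq (4 * k + 5) n (4 * k + 3) (by omega) (by omega) hmn] at IHm
        set r := n % (4 * k + 5) with hr
        have hrlt : r < 4 * k + 5 := Nat.mod_lt _ (by omega)
        have hcase : r = 0 ∨ r = 1 ∨ (2 ≤ r ∧ r < 4 * k ∧ r % 4 = 0) ∨
            (2 ≤ r ∧ r < 4 * k ∧ r % 4 = 1) ∨ (r < 4 * k ∧ r % 4 = 2) ∨
            (r < 4 * k ∧ r % 4 = 3) ∨ r = 4 * k ∨ r = 4 * k + 1 ∨ r = 4 * k + 2 ∨
            r = 4 * k + 3 ∨ r = 4 * k + 4 := by omega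
        rcases hcase with hc | hc | hc | hc | hc | hc | hc | hc | hc | hc | hc
        · -- r = 0
          rw [if_neg (by omega), table_eq_LR k _ (by omega)] at IH2
          rw [if_neg (by omega), table_eq_L1 k _ (by omega)] at IHm
          rw [table_eq_L k r (by omega)]
          exact equiv_trans (equiv_opts_pair IH2 IHm) equiv_B3
        · -- r = 1
          rw [if_neg (by omega), table_eq_B k _ (by omega)] at IH2
          rw [if_neg (by omega), table_eq_R1 k _ (by omega)] at IHm
          rw [table_eq_R k r (by omega)]
          exact equiv_trans (equiv_opts_pair IH2 IHm) equiv_B4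
        · -- 2 ≤ r < 4k, r % 4 = 0
          rw [if_pos (by omega), table_eq_L1 k _ (by omega)] at IH2
          rw [if_neg (by omega), table_eq_L1 k _ (by omega)] at IHm
          rw [table_eq_L k r (by omega)]
          exact equiv_trans (equiv_opts_pair IH2 IHm)
            (equiv_trans (equiv_pair_dup _) equiv_B1)
        · -- 2 ≤ r < 4k, r % 4 = 1
          rw [if_pos (by omega), table_eq_R1 k _ (by omega)] at IH2
          rw [if_neg (by omega), table_eq_R1 k _ (by omega)] at IHm
          rw [table_eq_R k r (by omega)]
          exact equiv_trans (equiv_opts_pair IH2 IHm)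
            (equiv_trans (equiv_pair_dup _) equiv_B2)
        · -- r < 4k, r % 4 = 2
          rw [if_pos (by omega), table_eq_L k _ (by omega)] at IH2
          rw [if_neg (by omega), table_eq_L k _ (by omega)] at IHm
          rw [table_eq_L1 k r (by omega)]
          exact equiv_trans (equiv_opts_pair IH2 IHm) (equiv_pair_dup _)
        · -- r < 4k, r % 4 = 3
          rw [if_pos (by omega), table_eq_R k _ (by omega)] at IH2
          rw [if_neg (by omega), table_eq_R k _ (by omega)] at IHm
          rw [table_eq_R1 k r (by omega)]
          exact equiv_trans (equiv_opts_pair IH2 IHm) (equiv_pair_dup _)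
        · -- r = 4k
          rw [if_pos (by omega), table_eq_L1 k _ (by omega)] at IH2
          rw [if_neg (by omega), table_eq_L1 k _ (by omega)] at IHm
          rw [table_eq_L k r (by omega)]
          exact equiv_trans (equiv_opts_pair IH2 IHm)
            (equiv_trans (equiv_pair_dup _) equiv_B1)
        · -- r = 4k + 1
          rw [if_pos (by omega), table_eq_R1 k _ (by omega)] at IH2
          rw [if_neg (by omega), table_eq_LR k _ (by omega)] at IHm
          rw [table_eq_R k r (by omega)]
          exact equiv_trans (equiv_opts_pair IH2 IHm) equiv_B5
        · -- r = 4k + 2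
          rw [if_pos (by omega), table_eq_L k _ (by omega)] at IH2
          rw [if_neg (by omega), table_eq_B k _ (by omega)] at IHm
          rw [table_eq_L1 k r (by omega)]
          exact equiv_trans (equiv_opts_pair IH2 IHm) equiv_B6
        · -- r = 4k + 3
          rw [if_pos (by omega), table_eq_R k _ (by omega)] at IH2
          rw [if_pos (by omega), table_eq_L k _ (by omega)] at IHm
          rw [table_eq_LR k r (by omega)]
          exact equiv_trans (equiv_opts_pair IH2 IHm) (equiv_swap _ _)
        · -- r = 4k + 4
          rw [if_pos (by omega), table_eq_L1 k _ (by omega)] at IH2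
          rw [if_pos (by omega), table_eq_R k _ (by omega)] at IHm
          rw [table_eq_B k r (by omega)]
          exact equiv_trans (equiv_opts_pair IH2 IHm) (equiv_swap _ _)
      · rw [if_neg (by omega : ¬(2 ≤ 4 * k + 3 ∧ 4 * k + 3 ≤ n))]
        have e1 : n % (4 * k + 5) = n := Nat.mod_eq_of_lt (by omega)
        have IH2 := IH (n - 2) (by omega)
        rw [Nat.mod_eq_of_lt (by omega : n - 2 < 4 * k + 5)] at IH2
        rw [e1]
        have h4 : n % 4 = 0 ∨ n % 4 = 1 ∨ n % 4 = 2 ∨ n % 4 = 3 := by omega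
        rcases h4 with h4 | h4 | h4 | h4
        · rw [table_eq_L1 k (n - 2) (by omega)] at IH2
          rw [table_eq_L k n (by omega)]
          exact equiv_trans (equiv_opts_single IH2) equiv_B1
        · rw [table_eq_R1 k (n - 2) (by omega)] at IH2
          rw [table_eq_R k n (by omega)]
          exact equiv_trans (equiv_opts_single IH2) equiv_B2
        · rw [table_eq_L k (n - 2) (by omega)] at IH2
          rw [table_eq_L1 k n (by omega)]
          exact equiv_opts_single IH2
        · rw [table_eq_R k (n - 2) (by omega)] at IH2
          rw [table_eq_R1 k n (by omega)]
          exact equiv_opts_single IH2
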